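/- For 0 < q < p ≤ 1, any n ≥ 1, and any x ∈ [0,1], the revised (p,q)-Bernstein operator applied to f(t) = t satisfies B_{n,p,q}(t; x) = x. -/

import Mathlib

open Finset

noncomputable def pqInt (p q : ℝ) (m : ℕ) : ℝ := (p ^ m - q ^ m) / (p - q)

noncomputable def pqFact (p q : ℝ) (m : ℕ) : ℝ := ∏ j ∈ Finset.Icc 1 m, pqInt p q j

noncomputable def pqChoose (p q : ℝ) (n k : ℕ) : ℝ :=
  pqFact p q n / (pqFact p q k * pqFact p q (n - k))

lemma pqInt_pos {p q : ℝ} (hq : 0 < q) (hqp : q < p) {m : ℕ} (hm : 1 ≤ m) : 0 < pqInt p q m := by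
  have h1 : q ^ m < p ^ m := pow_lt_pow_left₀ hqp hq.le (by omega)
  have h2 : 0 < p - q := by linarith
  exact div_pos (by linarith) h2

lemma pqInt_zero (p q : ℝ) : pqInt p q 0 = 0 := by simp [pqInt]

lemma pqFact_pos {p q : ℝ} (hq : 0 < q) (hqp : q < p) (m : ℕ) : 0 < pqFact p q m :=
  Finset.prod_pos fun j hj => pqInt_pos hq hqp (Finset.mem_Icc.mp hj).1

lemma pqFact_succ (p q : ℝ) (m : ℕ) :
    pqFact p q (m + 1) = pqFact p q m * pqInt p q (m + 1) := by
  rw [pqFact, pqFact, Finset.prod_Icc_succ_top (by omega)]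

lemma pqInt_add {p q : ℝ} (hqp : q < p) (a b : ℕ) :
    pqInt p q (a + b) = p ^ a * pqInt p q b + q ^ b * pqInt p q a := by
  have h : p - q ≠ 0 := by intro h; linarith [sub_eq_zero.mp h]
  simp only [pqInt]
  field_simp
  ring

lemma half (k : ℕ) : (k + 1) * k / 2 = k * (k - 1) / 2 + k := by
  have h3 : (k + 1).choose 2 = k + k.choose 2 := by simp [Nat.choose_succ_succ]
  rw [Nat.choose_two_right, Nat.choose_two_right] at h3
  simp at h3; omega

lemma pascal {p q : ℝ} (hq : 0 < q) (hqp : q < p) {n k : ℕ} (hk : k + 1 ≤ n) :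
    pqChoose p q (n+1) (k+1) =
      p ^ (k+1) * pqChoose p q n (k+1) + q ^ (n-k) * pqChoose p q n k := by
  have hnk : n - k = (n - (k+1)) + 1 := by omega
  have hInt : pqInt p q (n+1) = p ^ (k+1) * pqInt p q (n-k) + q ^ (n-k) * pqInt p q (k+1) := by
    have := pqInt_add hqp (k+1) (n-k)
    rw [show k + 1 + (n - k) = n + 1 by omega] at this
    exact this
  rw [pqChoose, pqChoose, pqChoose, pqFact_succ p q n,
    show n + 1 - (k + 1) = n - k by omega, pqFact_succ p q k,
    hnk, pqFact_succ p q (n - (k+1)), ← hnk, hInt]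
  have f1 := (pqFact_pos hq hqp n).ne'
  have f2 := (pqFact_pos hq hqp k).ne'
  have f3 := (pqFact_pos hq hqp (n - (k+1))).ne'
  have i1 := (pqInt_pos hq hqp (m := k+1) (by omega)).ne'
  have i2 := (pqInt_pos hq hqp (m := n-k) (by omega)).ne'
  rw [show n - k = (n - (k+1)) + 1 from hnk] at i2 ⊢
  field_simp

noncomputable def Gs (p q x : ℝ) (n : ℕ) : ℝ :=
  ∑ k ∈ Finset.range (n+1), pqChoose p q n k * p ^ (k*(k-1)/2) * x ^ k *
    ∏ s ∈ Finset.range (n-k), (p ^ s - q ^ s * x)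

lemma Gs_succ {p q : ℝ} (hq : 0 < q) (hqp : q < p) (x : ℝ) (n : ℕ) :
    Gs p q x (n+1) = p ^ n * Gs p q x n := by
  have hp0 : (0:ℝ) < p := hq.trans hqp
  set S1 : ℕ → ℝ := fun k => p ^ k * pqChoose p q n k * p ^ (k*(k-1)/2) * x ^ k *
    ∏ s ∈ Finset.range (n+1-k), (p ^ s - q ^ s * x) with hS1
  set S2 : ℕ → ℝ := fun k => q ^ (n-k) * pqChoose p q n k * p ^ ((k+1)*k/2) * x ^ (k+1) *
    ∏ s ∈ Finset.range (n-k), (p ^ s - q ^ s * x) with hS2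
  have stepA : Gs p q x (n+1) = ∑ k ∈ Finset.range (n+1), (S1 k + S2 k) := by
    rw [Finset.sum_add_distrib]
    -- decompose both sides
    rw [Gs, Finset.sum_range_succ' _ (n+1)]
    rw [Finset.sum_range_succ _ n]  -- inner: sum over range n of T(k+1), plus T(n+1)
    rw [show ∑ k ∈ Finset.range (n+1), S1 k = S1 0 + ∑ k ∈ Finset.range n, S1 (k+1) from
      by rw [Finset.sum_range_succ' S1 n]; ring]
    rw [Finset.sum_range_succ S2 n]
    have hch0 : ∀ m : ℕ, pqChoose p q m 0 = 1 := by
      intro m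
      have h0 : pqFact p q 0 = 1 := by simp [pqFact]
      rw [pqChoose, Nat.sub_zero, h0, one_mul, div_self (pqFact_pos hq hqp m).ne']
    have e0 : pqChoose p q (n+1) 0 * p ^ (0*(0-1)/2) * x ^ 0 *
        ∏ s ∈ Finset.range (n+1-0), (p ^ s - q ^ s * x) = S1 0 := by
      rw [hch0, hS1]; simp [hch0]
    have eTop : pqChoose p q (n+1) (n+1) * p ^ ((n+1)*((n+1)-1)/2) * x ^ (n+1) *
        ∏ s ∈ Finset.range (n+1-(n+1)), (p ^ s - q ^ s * x) = S2 n := by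
      have hchs : ∀ m : ℕ, pqChoose p q m m = 1 := by
        intro m
        have h0 : pqFact p q 0 = 1 := by simp [pqFact]
        rw [pqChoose, Nat.sub_self, h0, mul_one, div_self (pqFact_pos hq hqp m).ne']
      rw [hchs, hS2]
      simp [hchs, show n+1-(n+1) = 0 by omega, show n - n = 0 by omega]
    have eMid : ∀ k ∈ Finset.range n,
        pqChoose p q (n+1) (k+1) * p ^ ((k+1)*((k+1)-1)/2) * x ^ (k+1) *
          ∏ s ∈ Finset.range (n+1-(k+1)), (p ^ s - q ^ s * x) = S1 (k+1) + S2 k := by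
      intro k hk
      rw [Finset.mem_range] at hk
      rw [pascal hq hqp (by omega : k + 1 ≤ n)]
      simp only [hS1, hS2, show (k+1) - 1 = k by omega, show n+1-(k+1) = n-k by omega]
      ring
    rw [Finset.sum_congr rfl eMid, e0, eTop, Finset.sum_add_distrib]
    ring
  rw [stepA, Gs, Finset.mul_sum]
  refine Finset.sum_congr rfl fun k hk => ?_
  rw [Finset.mem_range] at hk
  have hpk : p ^ k * p ^ (n-k) = p ^ n := by rw [← pow_add]; congr 1; omega
  simp only [hS1, hS2, half k, pow_add,
    show n+1-k = (n-k)+1 by omega, Finset.prod_range_succ]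
  linear_combination (pqChoose p q n k * p ^ (k*(k-1)/2) * x ^ k *
    ∏ s ∈ Finset.range (n-k), (p ^ s - q ^ s * x)) * hpk

lemma Gs_zero (p q x : ℝ) (hq : 0 < q) (hqp : q < p) : Gs p q x 0 = 1 := by
  have h0 : pqFact p q 0 = 1 := by simp [pqFact]
  simp [Gs, pqChoose, h0]

lemma Gs_eq {p q : ℝ} (hq : 0 < q) (hqp : q < p) (x : ℝ) (n : ℕ) :
    Gs p q x n = p ^ (n*(n-1)/2) := by
  induction n with
  | zero => simp [Gs_zero p q x hq hqp]
  | succ m ih =>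
      rw [Gs_succ hq hqp x m, ih, ← pow_add]
      congr 1
      rw [show (m+1) * (m+1-1) / 2 = (m+1)*m/2 by simp, half m]
      omega

lemma chooseMul {p q : ℝ} (hq : 0 < q) (hqp : q < p) {m k : ℕ} (hk : k ≤ m) :
    pqChoose p q (m+1) (k+1) * pqInt p q (k+1) = pqChoose p q m k * pqInt p q (m+1) := by
  rw [pqChoose, pqChoose, pqFact_succ p q m, pqFact_succ p q k,
    show m + 1 - (k + 1) = m - k by omega]
  have f1 := (pqFact_pos hq hqp m).ne'
  have f2 := (pqFact_pos hq hqp k).ne'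
  have f3 := (pqFact_pos hq hqp (m - k)).ne'
  have i1 := (pqInt_pos hq hqp (m := k+1) (by omega)).ne'
  field_simp


/-- The sample node `[k]_{p,q}/(p^{k-n}[n]_{p,q}) = p^{n-k}[k]_{p,q}/[n]_{p,q}`. -/
noncomputable def pqNode (p q : ℝ) (n k : ℕ) : ℝ :=
  p ^ (n - k) * pqInt p q k / pqInt p q n

/-- Basis function `b_{n,k}(x)` of the revised (p,q)-Bernstein operator. -/
noncomputable def pqBasis (p q : ℝ) (n k : ℕ) (x : ℝ) : ℝ :=
  (p ^ (n * (n - 1) / 2))⁻¹ * pqChoose p q n k * p ^ (k * (k - 1) / 2) * x ^ k *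
    ∏ s ∈ Finset.range (n - k), (p ^ s - q ^ s * x)

/-- The revised (p,q)-Bernstein operator. -/
noncomputable def pqBern (p q : ℝ) (n : ℕ) (f : ℝ → ℝ) (x : ℝ) : ℝ :=
  ∑ k ∈ Finset.range (n + 1), pqBasis p q n k x * f (pqNode p q n k)

theorem pqBern_id (p q : ℝ) (n : ℕ) (hn : 1 ≤ n)
    (hq : 0 < q) (hqp : q < p) (hp : p ≤ 1) (x : ℝ) (hx : x ∈ Set.Icc (0:ℝ) 1) :
    pqBern p q n (fun t => t) x = x := by
  have hp0 : (0:ℝ) < p := hq.trans hqp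
  obtain ⟨m, rfl⟩ : ∃ m, n = m + 1 := ⟨n - 1, by omega⟩
  have hIm := (pqInt_pos hq hqp (m := m+1) (by omega)).ne'
  have hE : (m+1) * ((m+1) - 1) / 2 = m * (m-1) / 2 + m := by
    rw [show (m+1) * (m+1-1) / 2 = (m+1)*m/2 by simp, half m]
  rw [pqBern, Finset.sum_range_succ' _ (m+1)]
  have h0 : pqBasis p q (m+1) 0 x * pqNode p q (m+1) 0 = 0 := by
    simp [pqNode, pqInt_zero]
  rw [h0, add_zero]
  have key : ∀ k ∈ Finset.range (m+1),
      pqBasis p q (m+1) (k+1) x * pqNode p q (m+1) (k+1) =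
      (p ^ ((m+1) * ((m+1)-1) / 2))⁻¹ * p ^ m * x *
        (pqChoose p q m k * p ^ (k*(k-1)/2) * x ^ k *
          ∏ s ∈ Finset.range (m-k), (p ^ s - q ^ s * x)) := by
    intro k hk
    rw [Finset.mem_range] at hk
    have hcm := chooseMul hq hqp (m := m) (k := k) (by omega)
    rw [pqBasis, pqNode, show m + 1 - (k + 1) = m - k by omega,
      show (k+1) - 1 = k by simp, half k]
    have hpk2 : p ^ k * p ^ (m-k) = p ^ m := by
      rw [← pow_add]; congr 1; omega
    rw [div_eq_mul_inv]
    have hI1 : pqInt p q (m+1) * (pqInt p q (m+1))⁻¹ = 1 := mul_inv_cancel₀ hIm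
    linear_combination (exp := 1) ((p ^ ((m+1)*((m+1)-1)/2))⁻¹ * p ^ (k*(k-1)/2) * x * x ^ k *
        (∏ s ∈ Finset.range (m-k), (p ^ s - q ^ s * x)) * p ^ k * p ^ (m-k) * (pqInt p q (m+1))⁻¹) * hcm +
      ((p ^ ((m+1)*((m+1)-1)/2))⁻¹ * p ^ (k*(k-1)/2) * x * x ^ k *
        (∏ s ∈ Finset.range (m-k), (p ^ s - q ^ s * x)) * pqChoose p q m k) * (p ^ k * p ^ (m-k)) * hI1 +
      ((p ^ ((m+1)*((m+1)-1)/2))⁻¹ * p ^ (k*(k-1)/2) * x * x ^ k *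
        (∏ s ∈ Finset.range (m-k), (p ^ s - q ^ s * x)) * pqChoose p q m k) * hpk2
  rw [Finset.sum_congr rfl key, ← Finset.mul_sum,
    show (∑ k ∈ Finset.range (m+1), (pqChoose p q m k * p ^ (k*(k-1)/2) * x ^ k *
      ∏ s ∈ Finset.range (m-k), (p ^ s - q ^ s * x))) = Gs p q x m from rfl,
    Gs_eq hq hqp x m, hE, pow_add]
  field_simp
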